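/- Let A be a commutative k-algebra and let a₁, …, aₙ ∈ A be elements that are algebraically independent over k. Then there exists a prime ideal 𝔭 ⊂ A such that the images of a₁, …, aₙ in A/𝔭 are still algebraically independent over k. -/

import Mathlib

/-- Let `A` be a commutative `k`-algebra and `a₁, …, aₙ ∈ A` elements
algebraically independent over `k`. Then there exists a prime ideal `𝔭 ⊂ A` such that
the images of the `aᵢ` in `A ⧸ 𝔭` are still algebraically independent over `k`. -/
theorem exists_prime_algebraicIndependent_quotient
    (k A : Type*) [Field k] [CommRing A] [Algebra k A]
    (n : ℕ) (a : Fin n → A) (ha : AlgebraicIndependent k a) :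
    ∃ 𝔭 : Ideal A, 𝔭.IsPrime ∧
      AlgebraicIndependent k (fun i => Ideal.Quotient.mk 𝔭 (a i)) := by
  classical
  have hinj : Function.Injective (MvPolynomial.aeval a) :=
    ha
  set S : Submonoid A :=
    { carrier := {x | ∃ p : MvPolynomial (Fin n) k, p ≠ 0 ∧ MvPolynomial.aeval a p = x}
      mul_mem' := by
        rintro x y ⟨p, hp, rfl⟩ ⟨q, hq, rfl⟩
        exact ⟨p * q, mul_ne_zero hp hq, map_mul _ _ _⟩
      one_mem' := ⟨1, one_ne_zero, map_one _⟩ } with hS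
  have hdisj : Disjoint ((⊥ : Ideal A) : Set A) (S : Set A) := by
    rw [Set.disjoint_left]
    rintro x hx ⟨p, hp, rfl⟩
    simp only [SetLike.mem_coe, Ideal.mem_bot] at hx
    exact hp (hinj (by simpa using hx))
  obtain ⟨𝔭, hprime, -, hdisj'⟩ := Ideal.exists_le_prime_disjoint ⊥ S hdisj
  refine ⟨𝔭, hprime, ?_⟩
  rw [algebraicIndependent_iff]
  intro p hp0
  by_contra hp
  have : MvPolynomial.aeval a p ∈ (S : Set A) := ⟨p, hp, rfl⟩
  refine Set.disjoint_left.1 hdisj' ?_ this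
  have : Ideal.Quotient.mk 𝔭 (MvPolynomial.aeval a p) = 0 := by
    have h := MvPolynomial.comp_aeval_apply (Ideal.Quotient.mkₐ k 𝔭) (f := a) p
    rw [MvPolynomial.aeval_def] at hp0
    simpa [Ideal.Quotient.mkₐ_eq_mk, h] using hp0
  exact Ideal.Quotient.eq_zero_iff_mem.1 this
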